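/- Let m, n ∈ ℤ_{≥0} and N ∈ ℤ_{>0}, and suppose that E4^m·E6^n satisfies a monic modular linear differential equation of weight 4m+6n and order N; that is, there exist modular forms g_i ∈ M_{2i} for 1 ≤ i ≤ N such that D_{4m+6n}^{(N)}(E4^m E6^n) + Σ_{i=1}^{N} g_i · D_{4m+6n}^{(N−i)}(E4^m E6^n) = 0. Then N ≥ max{m, n} + 1. -/

import Mathlib

open Complex Filter
open scoped Classical

noncomputable section

namespace MLDE

/-- The upper half-plane, as a subset of `ℂ`. -/
def UHP : Set ℂ := {z : ℂ | 0 < z.im}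

/-- `q = e^{2πiz}`. -/
def qq (z : ℂ) : ℂ := Complex.exp (2 * Real.pi * Complex.I * z)

/-- The normalized Eisenstein series `E₂`, via its `q`-expansion. -/
def E2 : ℂ → ℂ := fun z =>
  1 - 24 * ∑' n : ℕ, ((ArithmeticFunction.sigma 1 (n + 1) : ℕ) : ℂ) * qq z ^ (n + 1)

/-- The normalized Eisenstein series `E₄`, via its `q`-expansion. -/
def E4 : ℂ → ℂ := fun z =>
  1 + 240 * ∑' n : ℕ, ((ArithmeticFunction.sigma 3 (n + 1) : ℕ) : ℂ) * qq z ^ (n + 1)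

/-- The normalized Eisenstein series `E₆`, via its `q`-expansion. -/
def E6 : ℂ → ℂ := fun z =>
  1 - 504 * ∑' n : ℕ, ((ArithmeticFunction.sigma 5 (n + 1) : ℕ) : ℂ) * qq z ^ (n + 1)

/-- The modular group `SL(2, ℤ)`. -/
abbrev SL2Z := Matrix.SpecialLinearGroup (Fin 2) ℤ

/-- The automorphy factor `j(A, z) = cz + d`. -/
def jmat (A : SL2Z) (z : ℂ) : ℂ := (A.1 1 0 : ℤ) * z + (A.1 1 1 : ℤ)

/-- The Möbius action `Az = (az + b)/(cz + d)`. -/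
def moeb (A : SL2Z) (z : ℂ) : ℂ := ((A.1 0 0 : ℤ) * z + (A.1 0 1 : ℤ)) / jmat A z

/-- The weight-`k` slash action `(f|_k A)(z) = j(A,z)^{-k} f(Az)`, with principal branch powers. -/
def slash (k : ℝ) (A : SL2Z) (f : ℂ → ℂ) : ℂ → ℂ :=
  fun z => jmat A z ^ (-(k : ℂ)) * f (moeb A z)

/-- `f` is holomorphic on the upper half-plane. -/
def HolOn (f : ℂ → ℂ) : Prop := DifferentiableOn ℂ f UHP

/-- `f` has at most exponential growth around infinity. -/
def ExpGrowth (f : ℂ → ℂ) : Prop :=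
  ∃ C > (0:ℝ), ∃ M > (0:ℝ), ∀ z : ℂ, M < z.im → ‖f z‖ < Real.exp (C * z.im)

/-- `f` is bounded around infinity. -/
def BoundedAtInf (f : ℂ → ℂ) : Prop :=
  ∃ ε > (0:ℝ), ∃ M > (0:ℝ), ∀ z : ℂ, M < z.im → ‖f z‖ < ε

/-- `f` vanishes around infinity. -/
def VanishAtInf (f : ℂ → ℂ) : Prop :=
  ∀ ε > (0:ℝ), ∃ M > (0:ℝ), ∀ z : ℂ, M < z.im → ‖f z‖ < ε

/-- `f` is a holomorphic modular form of weight `k` on `SL(2, ℤ)`. -/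
def IsModularForm (k : ℤ) (f : ℂ → ℂ) : Prop :=
  HolOn f ∧ (∀ A : SL2Z, ∀ z ∈ UHP, f (moeb A z) = jmat A z ^ k * f z) ∧ BoundedAtInf f

/-- The Ramanujan–Serre derivative `D_k f = f' - (k/12) E₂ f`, where `f' = (2πi)⁻¹ df/dz`. -/
def serreD (k : ℝ) (f : ℂ → ℂ) : ℂ → ℂ :=
  fun z => (2 * (Real.pi : ℂ) * Complex.I)⁻¹ * deriv f z - ((k : ℂ) / 12) * E2 z * f z

/-- Iterated Ramanujan–Serre derivative `D_k^(n) = D_{k+2n-2} ∘ ⋯ ∘ D_{k+2} ∘ D_k`. -/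
def serreDIter (k : ℝ) : ℕ → (ℂ → ℂ) → (ℂ → ℂ)
  | 0, f => f
  | n + 1, f => serreD (k + 2 * n) (serreDIter k n f)

/-- `Σ_k`: the set of holomorphic functions on `ℍ` satisfying some monic MLDE of weight `k`. -/
def SigmaSet (k : ℝ) : Set (ℂ → ℂ) :=
  {f | HolOn f ∧ ∃ n : ℕ, ∃ g : ℕ → (ℂ → ℂ),
    (∀ i : ℕ, 1 ≤ i → i ≤ n → IsModularForm (2 * i) (g i)) ∧
    ∀ z ∈ UHP, serreDIter k n f z +
      ∑ i ∈ Finset.Icc 1 n, g i z * serreDIter k (n - i) f z = 0}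



/-- σ_k(n) ≤ n^(k+1) -/
lemma sigma_le_pow (k n : ℕ) : (ArithmeticFunction.sigma k) n ≤ n ^ (k+1) := by
  rcases Nat.eq_zero_or_pos n with rfl | hn
  · simp
  rw [ArithmeticFunction.sigma_apply]
  have step1 : ∑ d ∈ n.divisors, d ^ k ≤ ∑ _d ∈ Finset.Icc 1 n, n ^ k := by
    apply Finset.sum_le_sum_of_subset_of_nonneg (fun d hd => Finset.mem_Icc.mpr
      ⟨Nat.pos_of_mem_divisors hd, Nat.divisor_le hd⟩) (fun _ _ _ => by positivity) |>.trans
    apply Finset.sum_le_sum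
    intro d hd
    exact Nat.pow_le_pow_left (Finset.mem_Icc.mp hd).2 k
  refine step1.trans ?_
  rw [Finset.sum_const, Nat.card_Icc]
  simp [pow_succ, mul_comm]

lemma pow6_le (n : ℕ) (hn : 1 ≤ n) : n ^ 6 ≤ 16 ^ n := by
  induction n with
  | zero => omega
  | succ m ih =>
    rcases Nat.lt_or_ge m 2 with hm | hm
    · interval_cases m <;> norm_num
    · have h1 : 2 * (m+1) ≤ 3 * m := by omega
      have h2 : (2 * (m+1))^6 ≤ (3*m)^6 := Nat.pow_le_pow_left h1 6
      have h3 : 64 * (m+1)^6 ≤ 729 * m^6 := by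
        calc 64 * (m+1)^6 = (2*(m+1))^6 := by ring
        _ ≤ (3*m)^6 := h2
        _ = 729 * m^6 := by ring
      have h4 : (m+1)^6 ≤ 16 * m^6 := by omega
      calc (m+1)^6 ≤ 16 * m^6 := h4
        _ ≤ 16 * 16^m := by
            have := ih (by omega); omega
        _ = 16^(m+1) := by ring

lemma four_pow6_le (n : ℕ) (hn : 2 ≤ n) : 4 * n ^ 6 ≤ 16 ^ n := by
  induction n with
  | zero => omega
  | succ m ih =>
    rcases Nat.lt_or_ge m 2 with hm | hm
    · interval_cases m <;> norm_num
    · have h1 : 2 * (m+1) ≤ 3 * m := by omega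
      have h3 : 64 * (m+1)^6 ≤ 729 * m^6 := by
        calc 64 * (m+1)^6 = (2*(m+1))^6 := by ring
        _ ≤ (3*m)^6 := Nat.pow_le_pow_left h1 6
        _ = 729 * m^6 := by ring
      have h4 : 4 * (m+1)^6 ≤ 64 * m^6 := by omega
      calc 4 * (m+1)^6 ≤ 64 * m^6 := h4
        _ ≤ 4 * (4 * m ^ 6) * 4 := by ring_nf; omega
        _ ≤ 16 * 16^m := by have := ih hm; nlinarith
        _ = 16^(m+1) := by ring

/-- σ₅(n) ≤ 16^n / 4 for n ≥ 2, in ℝ -/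
lemma sigma5_bound {n : ℕ} (hn : 2 ≤ n) :
    ((ArithmeticFunction.sigma 5) n : ℝ) ≤ 16 ^ n / 4 := by
  have h1 : ((ArithmeticFunction.sigma 5) n : ℝ) ≤ (n:ℝ)^6 := by
    exact_mod_cast sigma_le_pow 5 n
  have h2 : 4 * (n:ℝ)^6 ≤ 16^n := by exact_mod_cast four_pow6_le n hn
  linarith

lemma sigma3_bound {n : ℕ} (hn : 2 ≤ n) :
    ((ArithmeticFunction.sigma 3) n : ℝ) ≤ 16 ^ n / 16 := by
  -- 16 n^4 ≤ 16^n for n ≥ 2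
  have key : ∀ m : ℕ, 2 ≤ m → 16 * m ^ 4 ≤ 16 ^ m := by
    intro m hm
    induction m with
    | zero => omega
    | succ j ih =>
      rcases Nat.lt_or_ge j 2 with hj | hj
      · interval_cases j <;> norm_num
      · have h1 : 2 * (j+1) ≤ 3 * j := by omega
        have h3 : 16 * (j+1)^4 ≤ 81 * j^4 := by
          calc 16 * (j+1)^4 = (2*(j+1))^4 := by ring
          _ ≤ (3*j)^4 := Nat.pow_le_pow_left h1 4
          _ = 81 * j^4 := by ring
        have h4 : 16 * (j+1)^4 ≤ 256 * j^4 := by omega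
        calc 16 * (j+1)^4 ≤ 256 * j^4 := h4
          _ = 16 * (16 * j^4) := by ring
          _ ≤ 16 * 16^j := by have := ih hj; omega
          _ = 16^(j+1) := by ring
  have h1 : ((ArithmeticFunction.sigma 3) n : ℝ) ≤ (n:ℝ)^4 := by
    exact_mod_cast sigma_le_pow 3 n
  have h2 : 16 * (n:ℝ)^4 ≤ 16^n := by exact_mod_cast key n hn
  linarith

lemma sigma_le_16pow (k n : ℕ) (hk : k ≤ 5) (hn : 1 ≤ n) :
    ((ArithmeticFunction.sigma k) n : ℝ) ≤ 16 ^ n := by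
  have h1 : (ArithmeticFunction.sigma k) n ≤ n ^ (k+1) := sigma_le_pow k n
  have h2 : n ^ (k+1) ≤ n ^ 6 := Nat.pow_le_pow_right (by omega) (by omega)
  have h3 : n ^ 6 ≤ 16 ^ n := pow6_le n hn
  exact_mod_cast h1.trans (h2.trans h3)

section Generic
variable {𝕜 : Type*} [RCLike 𝕜]

/-- summability of a geometrically bounded series -/
lemma summable_of_coeff_bound (c : ℕ → 𝕜) (C : ℝ) (hc : ∀ n, ‖c n‖ ≤ C * 16 ^ n)
    {q : 𝕜} (hq : ‖q‖ < 1/16) : Summable (fun n => c n * q ^ n) := by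
  have hC : 0 ≤ C := by
    have := (norm_nonneg (c 0)).trans (hc 0); simpa using this
  apply Summable.of_norm_bounded (g := fun n => C * (16 * ‖q‖) ^ n)
  · apply Summable.mul_left
    apply summable_geometric_of_lt_one (by positivity)
    nlinarith [norm_nonneg q]
  · intro n
    rw [norm_mul, norm_pow, mul_pow]
    calc ‖c n‖ * ‖q‖^n ≤ (C * 16^n) * ‖q‖^n := by
          apply mul_le_mul_of_nonneg_right (hc n) (by positivity)
      _ = C * (16^n * ‖q‖^n) := by ring
  -- done

lemma analyticOnNhd_tsum (c : ℕ → 𝕜) (C : ℝ) (hc : ∀ n, ‖c n‖ ≤ C * 16 ^ n) :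
    AnalyticOnNhd 𝕜 (fun q => ∑' n, c n * q ^ n) {q : 𝕜 | ‖q‖ < 1/16} := by
  have hC : 0 ≤ C := by
    have := (norm_nonneg (c 0)).trans (hc 0); simpa using this
  set p := FormalMultilinearSeries.ofScalars 𝕜 c with hp
  have hrad : ((16:NNReal))⁻¹ ≤ p.radius := by
    apply p.le_radius_of_bound C
    intro n
    rw [FormalMultilinearSeries.ofScalars_norm]
    calc ‖c n‖ * ((16:NNReal):ℝ)⁻¹ ^ n ≤ (C * 16^n) * (16:ℝ)⁻¹ ^ n := by
          push_cast
          apply mul_le_mul_of_nonneg_right (hc n) (by positivity)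
      _ = C * (16^n * (16:ℝ)⁻¹^n) := by ring
      _ = C := by
          rw [← mul_pow]
          norm_num
  have hpos : 0 < p.radius := lt_of_lt_of_le (by norm_num) hrad
  have hball := p.hasFPowerSeriesOnBall hpos
  intro q hq
  have hmem : q ∈ Metric.eball (0:𝕜) p.radius := by
    rw [Metric.mem_eball, edist_zero_right]
    calc (‖q‖₊ : ENNReal) < ((16:NNReal))⁻¹ := by
          rw [ENNReal.coe_lt_coe]
          have : ‖q‖ < ((16:NNReal):ℝ)⁻¹ := by push_cast; linarith [hq.out]
          exact_mod_cast this
      _ ≤ p.radius := hrad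
  have h1 : AnalyticAt 𝕜 p.sum q := hball.analyticAt_of_mem hmem
  have h2 : (fun q : 𝕜 => ∑' n, c n * q ^ n) = p.sum := by
    funext x
    have := FormalMultilinearSeries.ofScalars_sum_eq c x
    rw [FormalMultilinearSeries.ofScalarsSum] at this
    rw [← hp] at this
    rw [this]
    simp [smul_eq_mul]
  rw [h2]
  exact h1

end Generic

local notation "σ" => ArithmeticFunction.sigma


lemma sigma_one (k : ℕ) : (σ k) 1 = 1 := by
  simp [ArithmeticFunction.sigma_apply]

/-- the real series Σ σ_k(n+1) t^(n+1) -/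
def sg (k : ℕ) (t : ℝ) : ℝ := ∑' n : ℕ, ((σ k) (n+1) : ℝ) * t ^ (n+1)

lemma summable_sg (k : ℕ) (hk : k ≤ 5) {t : ℝ} (ht : |t| < 1/16) :
    Summable (fun n : ℕ => ((σ k) (n+1) : ℝ) * t ^ (n+1)) := by
  apply Summable.of_norm_bounded (g := fun n => (16 * |t|) ^ (n+1))
  · have h1 : Summable (fun n : ℕ => (16 * |t|) ^ n) :=
      summable_geometric_of_lt_one (by positivity) (by nlinarith [abs_nonneg t])
    exact (summable_nat_add_iff 1).mpr h1
  · intro n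
    rw [Real.norm_eq_abs, abs_mul, _root_.abs_pow, mul_pow]
    have h1 : |((σ k) (n+1) : ℝ)| = ((σ k) (n+1) : ℝ) := abs_of_nonneg (by positivity)
    rw [h1]
    exact mul_le_mul_of_nonneg_right (sigma_le_16pow k (n+1) hk (by omega)) (by positivity)

lemma summable_sg_shift (k : ℕ) (hk : k ≤ 5) {t : ℝ} (ht : |t| < 1/16) :
    Summable (fun n : ℕ => ((σ k) (n+2) : ℝ) * t ^ (n+2)) := by
  have h := (summable_nat_add_iff 1).mpr (summable_sg k hk ht)
  convert h using 2 with n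

lemma sg_zero (k : ℕ) : sg k 0 = 0 := by
  unfold sg
  convert tsum_zero with n
  simp

lemma sg_nonneg (k : ℕ) {t : ℝ} (ht : 0 ≤ t) : 0 ≤ sg k t :=
  tsum_nonneg (fun n => by positivity)

lemma sg_ge_first (k : ℕ) (hk : k ≤ 5) {t : ℝ} (h0 : 0 ≤ t) (ht : t < 1/16) :
    t ≤ sg k t := by
  have h := Summable.le_tsum (summable_sg k hk (by rw [_root_.abs_of_nonneg h0]; exact ht)) 0
    (fun m _ => by positivity)
  simpa [sigma_one, sg] using h

/-- uniform upper bound using σ_k(n) ≤ 16^n -/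
lemma sg_le (k : ℕ) (hk : k ≤ 5) {t : ℝ} (h0 : 0 ≤ t) (ht : t < 1/16) :
    sg k t ≤ 16 * t / (1 - 16 * t) := by
  have h16 : 16 * t < 1 := by linarith
  have hgeo : Summable (fun n : ℕ => (16*t) ^ (n+1)) :=
    (summable_nat_add_iff 1).mpr (summable_geometric_of_lt_one (by positivity) h16)
  have h := Summable.tsum_le_tsum (f := fun n : ℕ => ((σ k) (n+1) : ℝ) * t ^ (n+1))
    (g := fun n : ℕ => (16*t)^(n+1)) ?_ (summable_sg k hk (by rwa [_root_.abs_of_nonneg h0])) hgeo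
  · refine h.trans ?_
    have : ∑' n : ℕ, (16*t)^(n+1) = (16*t) * ∑' n : ℕ, (16*t)^n := by
      rw [← tsum_mul_left]
      congr 1; funext n; rw [pow_succ]; ring
    rw [this, tsum_geometric_of_lt_one (by positivity) h16]
    rw [div_eq_mul_inv]
  · intro n
    calc ((σ k) (n+1) : ℝ) * t ^ (n+1) ≤ 16^(n+1) * t^(n+1) :=
          mul_le_mul_of_nonneg_right (sigma_le_16pow k (n+1) hk (by omega)) (by positivity)
      _ = (16*t)^(n+1) := by rw [mul_pow]

/-- tail bound: |sg k (-t) + t| ≤ D * t^2/(1-16t) where coefficients σ_k(n) ≤ 16^n/c for n ≥ 2 -/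
lemma sg_neg_bound (k : ℕ) (hk : k ≤ 5) (D : ℝ) (hD : 0 ≤ D)
    (hcoef : ∀ n : ℕ, 2 ≤ n → ((σ k) n : ℝ) ≤ D * 16 ^ n / 256)
    {t : ℝ} (h0 : 0 ≤ t) (ht : t < 1/16) :
    |sg k (-t) + t| ≤ D * t^2 / (1 - 16*t) := by
  have habs : |(-t)| < 1/16 := by rw [abs_neg, _root_.abs_of_nonneg h0]; exact ht
  have hsum := summable_sg k hk habs
  have h16 : 16 * t < 1 := by linarith
  -- split off first term
  have hsplit := Summable.tsum_eq_zero_add hsum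
  have hfirst : ((σ k) 1 : ℝ) * (-t)^1 = -t := by rw [sigma_one]; push_cast; ring
  unfold sg
  rw [hsplit]
  simp only [zero_add] at hsplit ⊢
  rw [hfirst]
  have hrest : |∑' n : ℕ, ((σ k) (n+1+1) : ℝ) * (-t) ^ (n+1+1)| ≤ D * t^2 / (1 - 16*t) := by
    have hs2 : Summable (fun n : ℕ => ((σ k) (n+2) : ℝ) * (-t) ^ (n+2)) := by
      have := (summable_nat_add_iff 1).mpr hsum
      convert this using 2 with n
    have habs2 : Summable (fun n : ℕ => ((σ k) (n+2) : ℝ) * t ^ (n+2)) :=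
      summable_sg_shift k hk (by rwa [abs_neg] at habs)
    have h1 : |∑' n : ℕ, ((σ k) (n+1+1) : ℝ) * (-t) ^ (n+1+1)|
        ≤ ∑' n : ℕ, ((σ k) (n+2) : ℝ) * t ^ (n+2) := by
      have := norm_tsum_le_tsum_norm (f := fun n : ℕ => ((σ k) (n+2) : ℝ) * (-t) ^ (n+2)) ?_
      · rw [Real.norm_eq_abs] at this
        refine le_trans (le_of_eq ?_) (this.trans (le_of_eq ?_))
        · norm_num
        · congr 1; funext n
          rw [Real.norm_eq_abs, abs_mul, _root_.abs_pow, abs_neg,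
            _root_.abs_of_nonneg h0, _root_.abs_of_nonneg (by positivity)]
      · apply habs2.congr
        intro n
        rw [Real.norm_eq_abs, abs_mul, _root_.abs_pow, abs_neg,
          _root_.abs_of_nonneg h0, _root_.abs_of_nonneg (by positivity)]
    refine h1.trans ?_
    have hgeo : Summable (fun n : ℕ => D / 256 * (16*t)^(n+2)) := by
      apply Summable.mul_left
      exact (summable_nat_add_iff 2).mpr (summable_geometric_of_lt_one (by positivity) h16)
    have h2 : ∑' n : ℕ, ((σ k) (n+2) : ℝ) * t ^ (n+2) ≤ ∑' n : ℕ, D / 256 * (16*t)^(n+2) := by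
      apply Summable.tsum_le_tsum _ habs2 hgeo
      intro n
      calc ((σ k) (n+2) : ℝ) * t ^ (n+2) ≤ (D * 16^(n+2)/256) * t^(n+2) :=
            mul_le_mul_of_nonneg_right (hcoef (n+2) (by omega)) (by positivity)
        _ = D / 256 * (16*t)^(n+2) := by rw [mul_pow]; ring
    refine h2.trans ?_
    have h3 : ∑' n : ℕ, D / 256 * (16*t)^(n+2) = D / 256 * ((16*t)^2 * (1-16*t)⁻¹) := by
      rw [tsum_mul_left]
      congr 1
      have : ∀ n : ℕ, (16*t)^(n+2) = (16*t)^2 * (16*t)^n := fun n => by ring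
      rw [tsum_congr this, tsum_mul_left, tsum_geometric_of_lt_one (by positivity) h16]
    rw [h3, div_eq_mul_inv (D * t^2)]
    have : D / 256 * ((16*t)^2 * (1-16*t)⁻¹) = D * t^2 * (1-16*t)⁻¹ := by ring
    rw [this]
  convert hrest using 2
  ring

/-- sg k is continuous at points |t| < 1/16 -/
lemma sg_continuousAt (k : ℕ) (hk : k ≤ 5) {t : ℝ} (ht : |t| < 1/16) :
    ContinuousAt (sg k) t := by
  set cr : ℕ → ℝ := fun n => if n = 0 then 0 else ((σ k) n : ℝ) with hcr
  have hbd : ∀ n, ‖cr n‖ ≤ 1 * 16 ^ n := by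
    intro n
    rw [hcr]
    rcases Nat.eq_zero_or_pos n with rfl | hn
    · simp
    · simp only [Nat.pos_iff_ne_zero.mp hn, if_false, one_mul, Real.norm_eq_abs]
      rw [_root_.abs_of_nonneg (by positivity)]
      exact sigma_le_16pow k n hk hn
  have hana := analyticOnNhd_tsum cr 1 hbd
  have heq : Set.EqOn (sg k) (fun t : ℝ => ∑' n, cr n * t ^ n) {x : ℝ | ‖x‖ < 1/16} := by
    intro x hx
    have hx' : |x| < 1/16 := by simpa [Real.norm_eq_abs] using hx
    have hsum : Summable (fun n => cr n * x ^ n) :=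
      summable_of_coeff_bound cr 1 hbd (by simpa [Real.norm_eq_abs] using hx)
    simp only
    rw [Summable.tsum_eq_zero_add hsum]
    have h0 : cr 0 * x ^ 0 = 0 := by simp [hcr]
    rw [h0, zero_add]
    unfold sg
    congr 1
  have hopen : IsOpen {x : ℝ | ‖x‖ < 1/16} := isOpen_lt continuous_norm continuous_const
  have hmem : t ∈ {x : ℝ | ‖x‖ < 1/16} := by simpa [Real.norm_eq_abs] using ht
  have h1 : AnalyticAt ℝ (fun t : ℝ => ∑' n, cr n * t ^ n) t := hana t hmem
  have h2 : ContinuousAt (fun t : ℝ => ∑' n, cr n * t ^ n) t := h1.continuousAt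
  apply h2.congr
  exact (Filter.eventuallyEq_of_mem (hopen.mem_nhds hmem) heq).symm

-- numeric helper
lemma exp_pi_lt : Real.exp Real.pi < 100 := by
  have h1 : Real.pi < 4 := by linarith [Real.pi_lt_d2]
  have h2 : Real.exp Real.pi < Real.exp 4 := Real.exp_lt_exp.mpr h1
  have h3 : Real.exp 4 = (Real.exp 1)^4 := by
    rw [← Real.exp_nat_mul]; norm_num
  have h4 : (Real.exp 1)^4 < (2.7182818286:ℝ)^4 := by
    apply pow_lt_pow_left₀ Real.exp_one_lt_d9 (le_of_lt (Real.exp_pos 1))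
    norm_num
  nlinarith

lemma exp_16_gt : (100000:ℝ) ≤ Real.exp 12 := by
  have h3 : Real.exp 12 = (Real.exp 1)^12 := by
    rw [← Real.exp_nat_mul]; norm_num
  have h4 : ((2.7:ℝ))^12 ≤ (Real.exp 1)^12 := by
    apply pow_le_pow_left₀ (by norm_num)
    linarith [Real.exp_one_gt_d9]
  nlinarith [h4]

/-- The point on the imaginary axis (or the line re = 1/2) with q-parameter ±t. -/
lemma qq_of_t {t : ℝ} (h0 : 0 < t) (ht : t < 1) :
    qq (Complex.I * (-Real.log t / (2*Real.pi))) = (t : ℂ) := by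
  unfold qq
  have hπ : (Real.pi : ℝ) ≠ 0 := Real.pi_ne_zero
  have harg : 2 * (Real.pi:ℂ) * Complex.I * (Complex.I * (-(Real.log t:ℂ) / (2*(Real.pi:ℂ))))
      = ((Real.log t : ℝ) : ℂ) := by
    have hI : Complex.I * Complex.I = -1 := Complex.I_mul_I
    field_simp
    ring_nf
    rw [Complex.I_sq]
    have hπC : (Real.pi : ℂ) ≠ 0 := by exact_mod_cast hπ
    field_simp
  rw [harg, ← Complex.ofReal_exp, Real.exp_log h0]


lemma qq_of_t_neg {t : ℝ} (h0 : 0 < t) (ht : t < 1) :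
    qq ((1/2 : ℂ) + Complex.I * (-Real.log t / (2*Real.pi))) = -(t : ℂ) := by
  unfold qq
  rw [mul_add, Complex.exp_add]
  have h1 : 2 * (Real.pi:ℂ) * Complex.I * (1/2 : ℂ) = Real.pi * Complex.I := by ring
  rw [h1, Complex.exp_pi_mul_I]
  have h2 := qq_of_t h0 ht
  unfold qq at h2
  rw [h2]
  ring


/-- value of the σ-series at a real q -/
lemma tsum_sigma_real (k : ℕ) {z : ℂ} {t : ℝ} (h : qq z = (t:ℂ)) :
    ∑' n : ℕ, (((σ k) (n + 1) : ℕ) : ℂ) * qq z ^ (n + 1) = ((sg k t : ℝ) : ℂ) := by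
  rw [h]
  unfold sg
  rw [ofReal_tsum]
  congr 1; funext n
  push_cast
  ring

lemma E4_val {z : ℂ} {t : ℝ} (h : qq z = (t:ℂ)) :
    E4 z = ((1 + 240 * sg 3 t : ℝ) : ℂ) := by
  unfold E4; rw [tsum_sigma_real 3 h]; push_cast; ring

lemma E6_val {z : ℂ} {t : ℝ} (h : qq z = (t:ℂ)) :
    E6 z = ((1 - 504 * sg 5 t : ℝ) : ℂ) := by
  unfold E6; rw [tsum_sigma_real 5 h]; push_cast; ring

lemma im_of_point {t : ℝ} (h0 : 0 < t) (ht : t ≤ 1/100) :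
    (1/2 : ℝ) < -Real.log t / (2*Real.pi) := by
  have hπ := Real.pi_pos
  have hlt : t < Real.exp (-Real.pi) := by
    have h1 : Real.exp (-Real.pi) = (Real.exp Real.pi)⁻¹ := by
      rw [← Real.exp_neg]
    rw [h1]
    have h2 : Real.exp Real.pi < 100 := exp_pi_lt
    have : (100:ℝ)⁻¹ < (Real.exp Real.pi)⁻¹ := by
      apply inv_strictAnti₀ (Real.exp_pos _) h2
    linarith [this]
  have hlog : Real.log t < -Real.pi := by
    rwa [Real.log_lt_iff_lt_exp h0]
  rw [lt_div_iff₀ (by positivity)]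
  linarith

/-- existence of a zero of E6 with the needed properties -/
lemma exists_z0 : ∃ (z₀ : ℂ) (t₀ : ℝ), (1/2 : ℝ) < z₀.im ∧ qq z₀ = (t₀ : ℂ) ∧
    E6 z₀ = 0 ∧ E4 z₀ ≠ 0 := by
  -- IVT for G6 t = 1 - 504 * sg 5 t on [0, 1/100]
  set G6 : ℝ → ℝ := fun t => 1 - 504 * sg 5 t with hG6
  have hcont : ContinuousOn G6 (Set.Icc 0 (1/100)) := by
    apply ContinuousOn.sub continuousOn_const
    apply ContinuousOn.mul continuousOn_const
    intro x hx
    apply ContinuousAt.continuousWithinAt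
    apply sg_continuousAt 5 (by norm_num)
    rcases hx with ⟨hx1, hx2⟩
    rw [abs_lt]; constructor <;> nlinarith
  have hend : G6 (1/100) ≤ 1 - 504/100 := by
    have := sg_ge_first 5 (by norm_num) (t := 1/100) (by norm_num) (by norm_num)
    simp only [hG6]
    nlinarith
  have h0 : G6 0 = 1 := by simp [hG6, sg_zero]
  have hIVT := intermediate_value_Icc' (by norm_num : (0:ℝ) ≤ 1/100) hcont
  have h0mem : (0:ℝ) ∈ Set.Icc (G6 (1/100)) (G6 0) := by
    constructor
    · linarith
    · rw [h0]; norm_num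
  obtain ⟨t₀, ht₀mem, ht₀⟩ := hIVT h0mem
  have ht₀pos : 0 < t₀ := by
    rcases lt_or_eq_of_le ht₀mem.1 with h | h
    · exact h
    · exfalso; rw [← h] at ht₀; rw [h0] at ht₀; norm_num at ht₀
  refine ⟨Complex.I * (-Real.log t₀ / (2*Real.pi)), t₀, ?_, ?_, ?_, ?_⟩
  · have him : (Complex.I * (-Real.log t₀ / (2*Real.pi) : ℂ)).im
        = -Real.log t₀ / (2*Real.pi) := by
      have hπ := Real.pi_pos
      simp [Complex.mul_im, Complex.div_re, Complex.div_im]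
      field_simp
    rw [him]
    exact im_of_point ht₀pos ht₀mem.2
  · exact qq_of_t ht₀pos (by linarith [ht₀mem.2] : t₀ < 1)
  · rw [E6_val (qq_of_t ht₀pos (by linarith [ht₀mem.2] : t₀ < 1))]
    rw [show (1 - 504 * sg 5 t₀ : ℝ) = G6 t₀ from rfl, ht₀]; simp
  · rw [E4_val (qq_of_t ht₀pos (by linarith [ht₀mem.2] : t₀ < 1))]
    have h1 : (0:ℝ) ≤ sg 3 t₀ := sg_nonneg 3 ht₀pos.le
    have h2 : (1 + 240 * sg 3 t₀ : ℝ) ≠ 0 := by positivity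
    exact Complex.ofReal_ne_zero.mpr h2

lemma sg3_neg_le {t : ℝ} (h0 : 0 ≤ t) (ht : t ≤ 1/100) : sg 3 (-t) ≤ -t + 20 * t^2 := by
  have hb := sg_neg_bound 3 (by norm_num) 16 (by norm_num) ?_ h0 (by linarith)
  · have h1 : 16 * t^2 / (1 - 16*t) ≤ 20 * t^2 := by
      rw [div_le_iff₀ (by nlinarith)]
      nlinarith
    have := abs_le.mp hb
    linarith [this.2]
  · intro n hn
    have := sigma3_bound hn
    linarith

lemma sg5_neg_le {t : ℝ} (h0 : 0 ≤ t) (ht : t ≤ 1/100) : sg 5 (-t) ≤ -t + 77 * t^2 := by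
  have hb := sg_neg_bound 5 (by norm_num) 64 (by norm_num) ?_ h0 (by linarith)
  · have h1 : 64 * t^2 / (1 - 16*t) ≤ 77 * t^2 := by
      rw [div_le_iff₀ (by nlinarith)]
      nlinarith
    have := abs_le.mp hb
    linarith [this.2]
  · intro n hn
    have := sigma5_bound hn
    linarith

/-- existence of a zero of E4 with the needed properties -/
lemma exists_z1 : ∃ (z₁ : ℂ) (t₁ : ℝ), (1/2 : ℝ) < z₁.im ∧ qq z₁ = ((-t₁ : ℝ) : ℂ) ∧
    E4 z₁ = 0 ∧ E6 z₁ ≠ 0 := by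
  set G4 : ℝ → ℝ := fun t => 1 + 240 * sg 3 (-t) with hG4
  have hcont : ContinuousOn G4 (Set.Icc 0 (1/100)) := by
    apply ContinuousOn.add continuousOn_const
    apply ContinuousOn.mul continuousOn_const
    intro x hx
    apply ContinuousAt.continuousWithinAt
    apply ContinuousAt.comp (g := sg 3)
    · apply sg_continuousAt 3 (by norm_num)
      rcases hx with ⟨hx1, hx2⟩
      rw [abs_lt]; constructor <;> nlinarith
    · exact continuousAt_neg
  have hend : G4 (1/100) < 0 := by
    have := sg3_neg_le (t := 1/100) (by norm_num) (by norm_num)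
    simp only [hG4]
    nlinarith
  have h0 : G4 0 = 1 := by simp [hG4, sg_zero]
  have hIVT := intermediate_value_Icc' (by norm_num : (0:ℝ) ≤ 1/100) hcont
  have h0mem : (0:ℝ) ∈ Set.Icc (G4 (1/100)) (G4 0) := by
    constructor
    · linarith
    · rw [h0]; norm_num
  obtain ⟨t₁, ht₁mem, ht₁⟩ := hIVT h0mem
  have ht₁pos : 0 < t₁ := by
    rcases lt_or_eq_of_le ht₁mem.1 with h | h
    · exact h
    · exfalso; rw [← h] at ht₁; rw [h0] at ht₁; norm_num at ht₁
  have hqq : qq ((1/2 : ℂ) + Complex.I * (-Real.log t₁ / (2*Real.pi))) = ((-t₁ : ℝ) : ℂ) := by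
    have := qq_of_t_neg ht₁pos (by linarith [ht₁mem.2] : t₁ < 1)
    rw [this]; push_cast; ring
  refine ⟨(1/2 : ℂ) + Complex.I * (-Real.log t₁ / (2*Real.pi)), t₁, ?_, hqq, ?_, ?_⟩
  · have him : ((1/2 : ℂ) + Complex.I * (-Real.log t₁ / (2*Real.pi) : ℂ)).im
        = -Real.log t₁ / (2*Real.pi) := by
      have hπ := Real.pi_pos
      simp [Complex.add_im, Complex.mul_im, Complex.div_re, Complex.div_im]
      field_simp
    rw [him]
    exact im_of_point ht₁pos ht₁mem.2
  · rw [E4_val hqq]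
    rw [show (1 + 240 * sg 3 (-t₁) : ℝ) = G4 t₁ from rfl, ht₁]; simp
  · rw [E6_val hqq]
    have h1 : sg 5 (-t₁) ≤ -t₁ + 77 * t₁^2 := sg5_neg_le ht₁pos.le ht₁mem.2
    have h2 : sg 5 (-t₁) < 0 := by nlinarith [ht₁mem.2]
    have h3 : (1 - 504 * sg 5 (-t₁) : ℝ) ≠ 0 := by nlinarith
    exact Complex.ofReal_ne_zero.mpr h3

/-- non-vanishing at 2i : E4 -/
lemma qq_two_I : qq (2 * Complex.I) = ((Real.exp (-(4*Real.pi)) : ℝ) : ℂ) := by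
  unfold qq
  rw [show 2 * (Real.pi:ℂ) * Complex.I * (2 * Complex.I) = ((-(4*Real.pi) : ℝ) : ℂ) by
    push_cast
    rw [show (2:ℂ) * Real.pi * Complex.I * (2 * Complex.I) = 4 * Real.pi * (Complex.I*Complex.I) by ring,
      Complex.I_mul_I]
    ring]
  rw [← Complex.ofReal_exp]

lemma exp4pi_small : Real.exp (-(4*Real.pi)) ≤ 1/100000 := by
  have h1 : (12:ℝ) ≤ 4*Real.pi := by nlinarith [Real.pi_gt_three]
  have h2 : Real.exp (-(4*Real.pi)) ≤ Real.exp (-12) := Real.exp_le_exp.mpr (by linarith)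
  have h3 : Real.exp (-12) = (Real.exp 12)⁻¹ := by rw [← Real.exp_neg]
  have h4 := exp_16_gt
  have h5 : (Real.exp 12)⁻¹ ≤ 1/100000 := by
    rw [inv_le_comm₀ (Real.exp_pos 12) (by norm_num)]
    linarith
  linarith

lemma E4_two_I : E4 (2 * Complex.I) ≠ 0 := by
  rw [E4_val qq_two_I]
  have h1 : (0:ℝ) ≤ sg 3 (Real.exp (-(4*Real.pi))) := sg_nonneg 3 (Real.exp_pos _).le
  exact Complex.ofReal_ne_zero.mpr (by positivity)

lemma E6_two_I : E6 (2 * Complex.I) ≠ 0 := by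
  rw [E6_val qq_two_I]
  set r := Real.exp (-(4*Real.pi)) with hr
  have h0 : 0 < r := Real.exp_pos _
  have h1 : r ≤ 1/100000 := exp4pi_small
  have h2 : sg 5 r ≤ 16 * r / (1 - 16*r) := sg_le 5 (by norm_num) h0.le (by linarith)
  have h3 : 16 * r / (1 - 16*r) ≤ 32 * r := by
    rw [div_le_iff₀ (by nlinarith)]
    nlinarith
  have h4 : sg 5 r ≥ 0 := sg_nonneg 5 h0.le
  have h5 : (1 - 504 * sg 5 r : ℝ) ≠ 0 := by nlinarith
  exact Complex.ofReal_ne_zero.mpr h5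

/-- The region where our series representations are valid. -/

def UU : Set ℂ := {z : ℂ | 1/2 < z.im}

lemma isOpen_UU : IsOpen UU := isOpen_lt continuous_const Complex.continuous_im

lemma norm_qq (z : ℂ) : ‖qq z‖ = Real.exp (-(2 * Real.pi * z.im)) := by
  unfold qq
  rw [Complex.norm_exp]
  congr 1
  simp [Complex.mul_re, Complex.mul_im]

lemma qq_small {z : ℂ} (hz : z ∈ UU) : ‖qq z‖ < 1/16 := by
  rw [norm_qq]
  have him : 1/2 < z.im := hz
  have hπ := Real.pi_gt_three
  have h1 : Real.exp (-(2 * Real.pi * z.im)) < Real.exp (-3) := by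
    apply Real.exp_lt_exp.mpr
    nlinarith
  have h2 : Real.exp (-3) < 1/16 := by
    have h3 : Real.exp 3 = (Real.exp 1)^3 := by rw [← Real.exp_nat_mul]; norm_num
    have h4 : (16:ℝ) < Real.exp 3 := by
      have e1 := Real.exp_one_gt_d9
      have e2 : (2.7182818283:ℝ)^3 ≤ (Real.exp 1)^3 :=
        pow_le_pow_left₀ (by norm_num) e1.le 3
      rw [h3]
      nlinarith
    rw [Real.exp_neg]
    have h5 := inv_strictAnti₀ (by norm_num : (0:ℝ) < 16) h4
    norm_num at h5 ⊢
    linarith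
  linarith

lemma differentiable_qq : Differentiable ℂ qq := by
  unfold qq
  exact Differentiable.cexp ((differentiable_const _).mul differentiable_id)

lemma continuous_qq : Continuous qq := differentiable_qq.continuous

/-- generic analyticity of eisenstein-type q-series -/
lemma analyticAt_eis (b : ℂ) (hb : ‖b‖ ≤ 504) (k : ℕ) (hk : k ≤ 5) {z : ℂ}
    (hz : ‖qq z‖ < 1/16) :
    AnalyticAt ℂ (fun w => 1 + b * ∑' n : ℕ, (((σ k) (n+1) : ℕ) : ℂ) * qq w ^ (n+1)) z := by
  set c : ℕ → ℂ := fun n => if n = 0 then 1 else b * ((σ k) n : ℕ) with hc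
  have hbd : ∀ n, ‖c n‖ ≤ 504 * 16 ^ n := by
    intro n
    rcases Nat.eq_zero_or_pos n with rfl | hn
    · simp [hc]
    · simp only [hc, Nat.pos_iff_ne_zero.mp hn, if_false]
      rw [norm_mul]
      have h1 : ‖(((σ k) n : ℕ) : ℂ)‖ = (((σ k) n : ℕ) : ℝ) := by
        rw [Complex.norm_natCast]
      rw [h1]
      exact mul_le_mul hb (sigma_le_16pow k n hk hn) (by positivity) (by norm_num)
  have hana := analyticOnNhd_tsum c 504 hbd
  have hqa : AnalyticAt ℂ qq z := differentiable_qq.analyticAt z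
  have hcomp : AnalyticAt ℂ ((fun q => ∑' n, c n * q ^ n) ∘ qq) z :=
    (hana (qq z) hz).comp hqa
  apply hcomp.congr
  have hopen : IsOpen {w : ℂ | ‖qq w‖ < 1/16} :=
    isOpen_lt (continuous_norm.comp continuous_qq) continuous_const
  apply Filter.eventuallyEq_of_mem (hopen.mem_nhds hz)
  intro w hw
  have hsum : Summable (fun n => c n * qq w ^ n) := summable_of_coeff_bound c 504 hbd hw
  simp only [Function.comp_apply]
  rw [Summable.tsum_eq_zero_add hsum]
  have h0 : c 0 * qq w ^ 0 = 1 := by simp [hc]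
  rw [h0]
  congr 1
  have h1 : ∀ n : ℕ, c (n+1) * qq w ^ (n+1) = b * ((((σ k) (n+1) : ℕ) : ℂ) * qq w ^ (n+1)) := by
    intro n
    simp only [hc, Nat.succ_ne_zero, if_false]
    ring
  rw [tsum_congr h1, tsum_mul_left]

lemma analyticAt_E4 {z : ℂ} (hz : z ∈ UU) : AnalyticAt ℂ E4 z :=
  analyticAt_eis 240 (by norm_num) 3 (by norm_num) (qq_small hz)

lemma analyticAt_E6 {z : ℂ} (hz : z ∈ UU) : AnalyticAt ℂ E6 z := by
  have h := analyticAt_eis (-504) (by norm_num) 5 (by norm_num) (qq_small hz)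
  have : E6 = fun w => 1 + (-504) * ∑' n : ℕ, (((σ 5) (n+1) : ℕ) : ℂ) * qq w ^ (n+1) := by
    funext w; unfold E6; ring
  rw [this]
  exact h

lemma analyticAt_E2 {z : ℂ} (hz : z ∈ UU) : AnalyticAt ℂ E2 z := by
  have h := analyticAt_eis (-24) (by norm_num) 1 (by norm_num) (qq_small hz)
  have : E2 = fun w => 1 + (-24) * ∑' n : ℕ, (((σ 1) (n+1) : ℕ) : ℂ) * qq w ^ (n+1) := by
    funext w; unfold E2; ring
  rw [this]
  exact h

lemma two_I_mem_UU : (2 * Complex.I) ∈ UU := by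
  show (1/2 : ℝ) < (2 * Complex.I).im
  simp
  norm_num

/-- if an analytic function on UU is eventually zero at a point of UU but nonzero at 2i,
contradiction -/
lemma not_eventually_zero {E : ℂ → ℂ} (hana : AnalyticOnNhd ℂ E UU)
    (hval : E (2 * Complex.I) ≠ 0) {z : ℂ} (hz : z ∈ UU)
    (h : ∀ᶠ w in nhds z, E w = 0) : False := by
  have hpre : IsPreconnected UU := (convex_halfSpace_im_gt (1/2)).isPreconnected
  have hEq : E =ᶠ[nhds z] 0 := h.mono (fun w hw => by simp [hw])
  have := hana.eqOn_zero_of_preconnected_of_eventuallyEq_zero hpre hz hEq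
  exact hval (this two_I_mem_UU)


lemma isOpen_UHP : IsOpen UHP := isOpen_lt continuous_const Complex.continuous_im

lemma analyticAt_deriv {h : ℂ → ℂ} {z : ℂ} (hh : AnalyticAt ℂ h z) :
    AnalyticAt ℂ (deriv h) z := by
  obtain ⟨s, hs, hsa⟩ := hh.eventually_analyticAt.exists_mem
  have hana : AnalyticOnNhd ℂ h s := fun x hx => hsa x hx
  exact hana.deriv z (mem_of_mem_nhds hs)

lemma two_pi_I_ne : (2 * (Real.pi : ℂ) * Complex.I) ≠ 0 := by
  simp [Real.pi_ne_zero, Complex.I_ne_zero]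

/-- one step of the Serre derivative decreases the order of vanishing by exactly one -/
lemma serreD_step (κ : ℝ) (F : ℂ → ℂ) {z₀ : ℂ} (hE2 : AnalyticAt ℂ E2 z₀) (r : ℕ)
    (h : ℂ → ℂ) (hh : AnalyticAt ℂ h z₀)
    (hF : F =ᶠ[nhds z₀] fun z => (z - z₀) ^ (r+1) * h z) :
    ∃ h' : ℂ → ℂ, AnalyticAt ℂ h' z₀ ∧
      h' z₀ = (2 * (Real.pi:ℂ) * Complex.I)⁻¹ * (r+1) * h z₀ ∧
      serreD κ F =ᶠ[nhds z₀] fun z => (z - z₀) ^ r * h' z := by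
  set c : ℂ := (2 * (Real.pi:ℂ) * Complex.I)⁻¹ with hc
  refine ⟨fun z => c * (((r:ℂ)+1) * h z + (z - z₀) * deriv h z)
      - ((κ:ℂ)/12) * E2 z * ((z - z₀) * h z), ?_, ?_, ?_⟩
  · apply AnalyticAt.sub
    · apply AnalyticAt.mul analyticAt_const
      apply AnalyticAt.add
      · exact AnalyticAt.mul analyticAt_const hh
      · exact AnalyticAt.mul ((analyticAt_id.sub analyticAt_const)) (analyticAt_deriv hh)
    · apply AnalyticAt.mul
      · exact AnalyticAt.mul analyticAt_const hE2
      · exact AnalyticAt.mul ((analyticAt_id.sub analyticAt_const)) hh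
  · simp [mul_assoc]
  · have hder : deriv F =ᶠ[nhds z₀] deriv (fun z => (z - z₀) ^ (r+1) * h z) := hF.deriv
    have hhe : ∀ᶠ z in nhds z₀, AnalyticAt ℂ h z := hh.eventually_analyticAt
    filter_upwards [hder, hF, hhe] with z h1 h2 h3
    have hd : HasDerivAt (fun z => (z - z₀) ^ (r+1) * h z)
        (((r:ℂ)+1) * (z - z₀)^r * 1 * h z + (z - z₀)^(r+1) * deriv h z) z := by
      have hpow : HasDerivAt (fun z => (z - z₀) ^ (r+1)) (((r:ℂ)+1) * (z - z₀)^r * 1) z := by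
        have := ((hasDerivAt_id z).sub_const z₀).fun_pow (r+1)
        simpa using this
      have hder2 : HasDerivAt h (deriv h z) z := h3.differentiableAt.hasDerivAt
      exact hpow.mul hder2
    show (2 * (Real.pi : ℂ) * Complex.I)⁻¹ * deriv F z - ((κ : ℂ) / 12) * E2 z * F z = _
    rw [h1, hd.deriv, h2]
    rw [← hc]
    ring
/-- iterated version -/
lemma serreDIter_factor (k : ℝ) {z₀ : ℂ} (hE2 : AnalyticAt ℂ E2 z₀) (f : ℂ → ℂ)
    (R : ℕ) (h₀ : ℂ → ℂ) (hh₀ : AnalyticAt ℂ h₀ z₀) (hh₀0 : h₀ z₀ ≠ 0)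
    (hf : f =ᶠ[nhds z₀] fun z => (z - z₀) ^ R * h₀ z) :
    ∀ j, j ≤ R → ∃ h : ℂ → ℂ, AnalyticAt ℂ h z₀ ∧ h z₀ ≠ 0 ∧
      serreDIter k j f =ᶠ[nhds z₀] fun z => (z - z₀) ^ (R - j) * h z := by
  intro j
  induction j with
  | zero =>
    intro _
    exact ⟨h₀, hh₀, hh₀0, by simpa [serreDIter] using hf⟩
  | succ i ih =>
    intro hij
    obtain ⟨h, hha, hh0, hhe⟩ := ih (by omega)
    have hexp : R - i = (R - (i+1)) + 1 := by omega
    rw [hexp] at hhe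
    obtain ⟨h', hh'a, hh'v, hh'e⟩ :=
      serreD_step (k + 2 * i) (serreDIter k i f) hE2 (R - (i+1)) h hha hhe
    refine ⟨h', hh'a, ?_, hh'e⟩
    rw [hh'v]
    apply mul_ne_zero (mul_ne_zero (inv_ne_zero two_pi_I_ne) ?_) hh0
    exact Nat.cast_add_one_ne_zero (R - (i+1))

/-- the key contradiction lemma -/
lemma key {k : ℝ} {N R : ℕ} {f : ℂ → ℂ} {g : ℕ → ℂ → ℂ} {z₀ : ℂ}
    (hz₀ : z₀ ∈ UHP) (hE2 : AnalyticAt ℂ E2 z₀)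
    (hg : ∀ i, 1 ≤ i → i ≤ N → ContinuousAt (g i) z₀)
    (hNR : N ≤ R) (h₀ : ℂ → ℂ) (hh₀ : AnalyticAt ℂ h₀ z₀) (hh₀0 : h₀ z₀ ≠ 0)
    (hf : f =ᶠ[nhds z₀] fun z => (z - z₀) ^ R * h₀ z)
    (hmlde : ∀ z ∈ UHP, serreDIter k N f z +
      ∑ i ∈ Finset.Icc 1 N, g i z * serreDIter k (N - i) f z = 0) : False := by
  have hfact := serreDIter_factor k hE2 f R h₀ hh₀ hh₀0 hf
  obtain ⟨hN, hNa, hN0, hNe⟩ := hfact N hNR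
  -- choose factorizations for the lower-order terms
  have hchoice : ∀ i : ℕ, i ∈ Finset.Icc 1 N → ∃ h : ℂ → ℂ, AnalyticAt ℂ h z₀ ∧ h z₀ ≠ 0 ∧
      serreDIter k (N - i) f =ᶠ[nhds z₀] fun z => (z - z₀) ^ (R - (N - i)) * h z :=
    fun i hi => hfact (N - i) (by omega)
  choose φ hφa hφ0 hφe using hchoice
  set H : ℂ → ℂ := fun z => hN z +
    ∑ i ∈ (Finset.Icc 1 N).attach, (z - z₀) ^ (i:ℕ) * g i z * φ i i.2 z with hH
  -- eventually, the MLDE left side equals (z-z₀)^(R-N) * H z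
  have hUHP : ∀ᶠ z in nhds z₀, z ∈ UHP := isOpen_UHP.eventually_mem hz₀
  have hall : ∀ᶠ z in nhds z₀, ∀ i (hi : i ∈ (Finset.Icc 1 N).attach),
      serreDIter k (N - i) f z = (z - z₀) ^ (R - (N - (i:ℕ))) * φ i i.2 z := by
    rw [eventually_all_finset]
    intro i _
    exact hφe i i.2
  have hzero : ∀ᶠ z in nhds z₀, (z - z₀) ^ (R - N) * H z = 0 := by
    filter_upwards [hUHP, hall, hNe] with z h1 h2 h3
    have hm := hmlde z h1
    rw [h3] at hm
    have hsum : ∑ i ∈ Finset.Icc 1 N, g i z * serreDIter k (N - i) f z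
        = ∑ i ∈ (Finset.Icc 1 N).attach, g i z *
          ((z - z₀) ^ (R - (N - (i:ℕ))) * φ i i.2 z) := by
      rw [← Finset.sum_attach]
      apply Finset.sum_congr rfl
      intro i _
      rw [h2 i (Finset.mem_attach _ i)]
    rw [hsum] at hm
    rw [hH]
    rw [mul_add, Finset.mul_sum]
    rw [← hm]
    congr 1
    apply Finset.sum_congr rfl
    intro i _
    have hie : R - (N - (i:ℕ)) = (R - N) + (i:ℕ) := by
      have h1 := (Finset.mem_Icc.mp i.2).1
      have h2 := (Finset.mem_Icc.mp i.2).2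
      omega
    rw [hie, pow_add]
    ring
  -- H is continuous at z₀ with H z₀ = hN z₀ ≠ 0
  have hHc : ContinuousAt H z₀ := by
    apply ContinuousAt.add hNa.continuousAt
    have hterm : ∀ i ∈ (Finset.Icc 1 N).attach,
        ContinuousAt (fun z => (z - z₀) ^ ((i : { x // x ∈ Finset.Icc 1 N }):ℕ) * g i z * φ i i.2 z) z₀ := by
      intro i _
      exact (((continuous_id.sub continuous_const).pow _).continuousAt.mul
        (hg i (Finset.mem_Icc.mp i.2).1 (Finset.mem_Icc.mp i.2).2)).mul
        (hφa i i.2).continuousAt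
    exact tendsto_finset_sum _ hterm
  have hH0 : H z₀ = hN z₀ := by
    rw [hH]
    simp only
    have : ∀ i ∈ (Finset.Icc 1 N).attach, (z₀ - z₀) ^ (i:ℕ) * g i z₀ * φ i i.2 z₀ = 0 := by
      intro i _
      have h1 := (Finset.mem_Icc.mp i.2).1
      rw [sub_self, zero_pow (by omega), zero_mul, zero_mul]
    rw [Finset.sum_congr rfl this, Finset.sum_const_zero, add_zero]
  -- on the punctured neighborhood H = 0
  have hpunct : ∀ᶠ z in nhdsWithin z₀ {z₀}ᶜ, H z = 0 := by
    have := hzero.filter_mono (nhdsWithin_le_nhds (s := {z₀}ᶜ))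
    filter_upwards [this, self_mem_nhdsWithin] with z h1 h2
    have hzz : z ≠ z₀ := by simpa using h2
    have hne : z - z₀ ≠ 0 := sub_ne_zero.mpr hzz
    have hp := pow_ne_zero (R - N) hne
    exact (mul_eq_zero.mp h1).resolve_left hp
  have htend1 : Filter.Tendsto H (nhdsWithin z₀ {z₀}ᶜ) (nhds (H z₀)) :=
    hHc.continuousWithinAt
  have htend2 : Filter.Tendsto H (nhdsWithin z₀ {z₀}ᶜ) (nhds 0) :=
    Filter.Tendsto.congr' (hpunct.mono fun z hz => hz.symm) tendsto_const_nhds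
  have : H z₀ = 0 := tendsto_nhds_unique htend1 htend2
  rw [hH0] at this
  exact hN0 this


/-- Lower bound for the order of a monic MLDE of weight `4m + 6n` satisfied by `E₄^m E₆^n`. -/
theorem order_lower_bound_E4_E6 (m n N : ℕ) (hN : 0 < N)
    (g : ℕ → (ℂ → ℂ)) (hg : ∀ i : ℕ, 1 ≤ i → i ≤ N → IsModularForm (2 * i) (g i))
    (hmlde : ∀ z ∈ UHP,
      serreDIter ((4 * m + 6 * n : ℕ) : ℝ) N (fun w : ℂ => E4 w ^ m * E6 w ^ n) z +
        ∑ i ∈ Finset.Icc 1 N,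
          g i z * serreDIter ((4 * m + 6 * n : ℕ) : ℝ) (N - i)
            (fun w : ℂ => E4 w ^ m * E6 w ^ n) z = 0) :
    max m n + 1 ≤ N := by
  by_contra hcon
  push_neg at hcon
  have hNle : N ≤ max m n := by omega
  have hgc : ∀ z₀ : ℂ, z₀ ∈ UHP → ∀ i, 1 ≤ i → i ≤ N → ContinuousAt (g i) z₀ := by
    intro z₀ hz i h1 h2
    have hol := (hg i h1 h2).1
    exact (hol.differentiableAt (isOpen_UHP.mem_nhds hz)).continuousAt
  rcases le_or_gt m n with hmn | hmn
  · -- use the zero of E6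
    have hNn : N ≤ n := by omega
    have hn1 : 1 ≤ n := le_trans hN hNn
    obtain ⟨z₀, t₀, him, hqqz, hE6z, hE4z⟩ := exists_z0
    have hzUU : z₀ ∈ UU := him
    have hzUHP : z₀ ∈ UHP := by
      show 0 < z₀.im
      have : (1/2:ℝ) < z₀.im := him
      linarith
    have hana := analyticAt_E6 hzUU
    have hont : analyticOrderAt E6 z₀ ≠ ⊤ := by
      intro h
      exact not_eventually_zero (fun z hz => analyticAt_E6 hz) E6_two_I hzUU
        (analyticOrderAt_eq_top.mp h)
    obtain ⟨r, hr⟩ := WithTop.ne_top_iff_exists.mp hont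
    obtain ⟨ψ, hψa, hψ0, hψe⟩ := (hana.analyticOrderAt_eq_natCast (n := r)).mp hr.symm
    have hr1 : 1 ≤ r := by
      rcases Nat.eq_zero_or_pos r with h0 | hpos
      swap
      · exact hpos
      · exfalso
        rw [h0] at hψe
        have h2 := hψe.self_of_nhds
        rw [hE6z, pow_zero, one_smul] at h2
        exact hψ0 h2.symm
    have hfe : (fun w : ℂ => E4 w ^ m * E6 w ^ n) =ᶠ[nhds z₀]
        fun z => (z - z₀) ^ (r*n) * (E4 z ^ m * ψ z ^ n) := by
      filter_upwards [hψe] with z hz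
      rw [hz, smul_eq_mul, mul_pow, ← pow_mul]
      ring
    exact key hzUHP (analyticAt_E2 hzUU) (hgc z₀ hzUHP)
      (le_trans hNn (Nat.le_mul_of_pos_left n hr1))
      _ (((analyticAt_E4 hzUU).pow m).mul (hψa.pow n))
      (mul_ne_zero (pow_ne_zero _ hE4z) (pow_ne_zero _ hψ0)) hfe hmlde
  · -- use the zero of E4
    have hNm : N ≤ m := by omega
    obtain ⟨z₁, t₁, him, hqqz, hE4z, hE6z⟩ := exists_z1
    have hzUU : z₁ ∈ UU := him
    have hzUHP : z₁ ∈ UHP := by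
      show 0 < z₁.im
      have : (1/2:ℝ) < z₁.im := him
      linarith
    have hana := analyticAt_E4 hzUU
    have hont : analyticOrderAt E4 z₁ ≠ ⊤ := by
      intro h
      exact not_eventually_zero (fun z hz => analyticAt_E4 hz) E4_two_I hzUU
        (analyticOrderAt_eq_top.mp h)
    obtain ⟨r, hr⟩ := WithTop.ne_top_iff_exists.mp hont
    obtain ⟨ψ, hψa, hψ0, hψe⟩ := (hana.analyticOrderAt_eq_natCast (n := r)).mp hr.symm
    have hr1 : 1 ≤ r := by
      rcases Nat.eq_zero_or_pos r with h0 | hpos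
      swap
      · exact hpos
      · exfalso
        rw [h0] at hψe
        have h2 := hψe.self_of_nhds
        rw [hE4z, pow_zero, one_smul] at h2
        exact hψ0 h2.symm
    have hfe : (fun w : ℂ => E4 w ^ m * E6 w ^ n) =ᶠ[nhds z₁]
        fun z => (z - z₁) ^ (r*m) * (ψ z ^ m * E6 z ^ n) := by
      filter_upwards [hψe] with z hz
      rw [hz, smul_eq_mul, mul_pow, ← pow_mul]
      ring
    exact key hzUHP (analyticAt_E2 hzUU) (hgc z₁ hzUHP)
      (le_trans hNm (Nat.le_mul_of_pos_left m hr1))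
      _ ((hψa.pow m).mul ((analyticAt_E6 hzUU).pow n))
      (mul_ne_zero (pow_ne_zero _ hψ0) (pow_ne_zero _ hE6z)) hfe hmlde

end MLDE
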